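/- For every integer k ≥ 2, the generating functions for Primc-coloured partitions satisfy G_{k_a}(q;a,c,d) − G_{(k−1)_d}(q;a,c,d) = E_{k_a}(q;a,c,d) = a q^k ( E_{(k−1)_b}(q;a,c,d) + G_{(k−2)_d}(q;a,c,d) ), with the convention G_{0_d} = 1. -/

import Mathlib

/-- The four colours of Primc's identity. -/
inductive PrimcColor : Type
  | a | b | c | d
  deriving DecidableEq

open PrimcColor

/-- The difference matrix B: B(x,y) is the minimal difference between a part of colour x
and the following part of colour y. -/
def matB : PrimcColor → PrimcColor → ℕ
  | a, a => 2 | a, b => 1 | a, c => 2 | a, d => 2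
  | b, a => 1 | b, b => 0 | b, c => 1 | b, d => 1
  | c, a => 0 | c, b => 1 | c, c => 0 | c, d => 2
  | d, a => 0 | d, b => 1 | d, c => 0 | d, d => 2

/-- A Primc-coloured partition: a finite sequence of coloured positive integers
satisfying the difference conditions of the matrix B. -/
def IsPrimcPartition (l : List (ℕ × PrimcColor)) : Prop :=
  (∀ p ∈ l, 0 < p.1) ∧ l.Chain' (fun p q => q.1 + matB p.2 q.2 ≤ p.1)

/-- The rank of the coloured integer k_x in the total order
1_a < 1_b < 1_c < 1_d < 2_a < 2_b < 2_c < 2_d < ⋯. -/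
def primcRank (k : ℕ) (x : PrimcColor) : ℕ :=
  4 * k + (match x with | a => 0 | b => 1 | c => 2 | d => 3)

/-- The coefficient ring ℤ[a,c,d]: a is the variable of index 0, c of index 1,
d of index 2. -/
abbrev PrimcRing : Type := MvPolynomial (Fin 3) ℤ

/-- The generating function G_{k_x}(q;a,c,d) for Primc-coloured partitions with largest
part at most k_x, as a formal power series in q over ℤ[a,c,d]: the coefficient of q^n is
Σ A'(n;i,j,t) a^i c^j d^t where A'(n;i,j,t) is the number of Primc-coloured partitions
of n with i parts coloured a, j parts coloured c, t parts coloured d, all parts being at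
most k_x (note G_{0_d} = 1 since no coloured positive integer is ≤ 0_d). -/
noncomputable def primcG (k : ℕ) (x : PrimcColor) : PowerSeries PrimcRing :=
  PowerSeries.mk fun n =>
    ∑ i ∈ Finset.range (n + 1), ∑ j ∈ Finset.range (n + 1), ∑ t ∈ Finset.range (n + 1),
      (Nat.card {lam : List (ℕ × PrimcColor) // IsPrimcPartition lam ∧
          (∀ p ∈ lam, primcRank p.1 p.2 ≤ primcRank k x) ∧
          (lam.map Prod.fst).sum = n ∧
          lam.countP (fun p => decide (p.2 = a)) = i ∧
          lam.countP (fun p => decide (p.2 = c)) = j ∧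
          lam.countP (fun p => decide (p.2 = d)) = t} : PrimcRing) *
        (MvPolynomial.X 0 ^ i * MvPolynomial.X 1 ^ j * MvPolynomial.X 2 ^ t)

/-- The generating function E_{k_x}(q;a,c,d) for Primc-coloured partitions whose largest
part is exactly k_x (the largest part being the first one, as the difference conditions
force the parts to be non-increasing in the order on coloured integers). -/
noncomputable def primcE (k : ℕ) (x : PrimcColor) : PowerSeries PrimcRing :=
  PowerSeries.mk fun n =>
    ∑ i ∈ Finset.range (n + 1), ∑ j ∈ Finset.range (n + 1), ∑ t ∈ Finset.range (n + 1),
      (Nat.card {lam : List (ℕ × PrimcColor) // IsPrimcPartition lam ∧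
          lam.head? = some (k, x) ∧
          (lam.map Prod.fst).sum = n ∧
          lam.countP (fun p => decide (p.2 = a)) = i ∧
          lam.countP (fun p => decide (p.2 = c)) = j ∧
          lam.countP (fun p => decide (p.2 = d)) = t} : PrimcRing) *
        (MvPolynomial.X 0 ^ i * MvPolynomial.X 1 ^ j * MvPolynomial.X 2 ^ t)
open PrimcColor in
lemma primcRank_le_of_step {p q : ℕ × PrimcColor} (h : q.1 + matB p.2 q.2 ≤ p.1) :
    primcRank q.1 q.2 ≤ primcRank p.1 p.2 := by
  obtain ⟨pv, px⟩ := p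
  obtain ⟨qv, qx⟩ := q
  cases px <;> cases qx <;> simp [matB, primcRank] at h ⊢ <;> omega

lemma rank_le_head {l : List (ℕ × PrimcColor)} (hl : IsPrimcPartition l)
    {hd : ℕ × PrimcColor} (hh : l.head? = some hd) :
    ∀ p ∈ l, primcRank p.1 p.2 ≤ primcRank hd.1 hd.2 := by
  haveI : IsTrans (ℕ × PrimcColor)
      (fun p q => primcRank q.1 q.2 ≤ primcRank p.1 p.2) :=
    ⟨fun _ _ _ h1 h2 => le_trans h2 h1⟩
  have hc : l.Chain' (fun p q => primcRank q.1 q.2 ≤ primcRank p.1 p.2) :=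
    hl.2.imp fun _ _ h => primcRank_le_of_step h
  replace hc := List.isChain_iff_pairwise.1 hc
  cases l with
  | nil => simp at hh
  | cons x tl =>
    simp only [List.head?_cons, Option.some.injEq] at hh
    subst hh
    intro p hp
    rcases List.mem_cons.1 hp with rfl | hp
    · exact le_refl _
    · exact (List.pairwise_cons.1 hc).1 p hp

open PrimcColor in
instance : Fintype PrimcColor :=
  ⟨⟨{a, b, c, d}, by decide⟩, fun x => by cases x <;> decide⟩

open PrimcColor

/-- Set version of the G-counting. -/
def primcSetG (k : ℕ) (x : PrimcColor) (n i j t : ℕ) : Set (List (ℕ × PrimcColor)) :=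
  {lam | IsPrimcPartition lam ∧
    (∀ p ∈ lam, primcRank p.1 p.2 ≤ primcRank k x) ∧
    (lam.map Prod.fst).sum = n ∧
    lam.countP (fun p => decide (p.2 = a)) = i ∧
    lam.countP (fun p => decide (p.2 = c)) = j ∧
    lam.countP (fun p => decide (p.2 = d)) = t}

/-- Set version of the E-counting. -/
def primcSetE (k : ℕ) (x : PrimcColor) (n i j t : ℕ) : Set (List (ℕ × PrimcColor)) :=
  {lam | IsPrimcPartition lam ∧
    lam.head? = some (k, x) ∧
    (lam.map Prod.fst).sum = n ∧
    lam.countP (fun p => decide (p.2 = a)) = i ∧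
    lam.countP (fun p => decide (p.2 = c)) = j ∧
    lam.countP (fun p => decide (p.2 = d)) = t}

lemma primcG_eq (k : ℕ) (x : PrimcColor) : primcG k x =
    PowerSeries.mk fun n =>
    ∑ i ∈ Finset.range (n + 1), ∑ j ∈ Finset.range (n + 1), ∑ t ∈ Finset.range (n + 1),
      (Nat.card (primcSetG k x n i j t) : PrimcRing) *
        (MvPolynomial.X 0 ^ i * MvPolynomial.X 1 ^ j * MvPolynomial.X 2 ^ t) := rfl

lemma primcE_eq (k : ℕ) (x : PrimcColor) : primcE k x =
    PowerSeries.mk fun n =>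
    ∑ i ∈ Finset.range (n + 1), ∑ j ∈ Finset.range (n + 1), ∑ t ∈ Finset.range (n + 1),
      (Nat.card (primcSetE k x n i j t) : PrimcRing) *
        (MvPolynomial.X 0 ^ i * MvPolynomial.X 1 ^ j * MvPolynomial.X 2 ^ t) := rfl

/-- The set of lists of positive coloured integers of fixed total sum is finite. -/
lemma primc_finite_aux (n : ℕ) :
    {lam : List (ℕ × PrimcColor) | (∀ p ∈ lam, 0 < p.1) ∧
      (lam.map Prod.fst).sum = n}.Finite := by
  classical
  have hT : {l : List (Fin (n + 1) × PrimcColor) | l.length ≤ n}.Finite :=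
    List.finite_length_le _ n
  have hg := hT.image (List.map (fun p : Fin (n + 1) × PrimcColor => ((p.1 : ℕ), p.2)))
  refine hg.subset ?_
  rintro lam ⟨hpos, hsum⟩
  have hle : ∀ p ∈ lam, p.1 ≤ n := by
    intro p hp
    have : p.1 ≤ (lam.map Prod.fst).sum :=
      List.single_le_sum (fun x _ => Nat.zero_le x) _ (List.mem_map_of_mem hp)
    omega
  have hlen : lam.length ≤ n := by
    have := List.length_le_sum_of_one_le (lam.map Prod.fst)
      (fun x hx => by
        obtain ⟨p, hp, rfl⟩ := List.mem_map.1 hx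
        exact hpos p hp)
    simpa [hsum] using this
  refine ⟨lam.map (fun p => ((⟨p.1 % (n + 1), Nat.mod_lt _ (Nat.succ_pos n)⟩ : Fin (n+1)), p.2)), by
    simpa using hlen, ?_⟩
  rw [List.map_map]
  conv_rhs => rw [show lam = lam.map id from (List.map_id lam).symm]
  refine List.map_congr_left ?_
  intro p hp
  simp [Nat.mod_eq_of_lt (Nat.lt_succ_of_le (hle p hp))]

lemma primcSetG_finite (k : ℕ) (x : PrimcColor) (n i j t : ℕ) :
    (primcSetG k x n i j t).Finite :=
  (primc_finite_aux n).subset fun _ h => ⟨h.1.1, h.2.2.1⟩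

lemma primcSetE_finite (k : ℕ) (x : PrimcColor) (n i j t : ℕ) :
    (primcSetE k x n i j t).Finite :=
  (primc_finite_aux n).subset fun _ h => ⟨h.1.1, h.2.2.1⟩

lemma counts_le {lam : List (ℕ × PrimcColor)} (hpos : ∀ p ∈ lam, 0 < p.1)
    {n : ℕ} (hsum : (lam.map Prod.fst).sum = n) (pr : ℕ × PrimcColor → Bool) :
    lam.countP pr ≤ n := by
  have hlen : lam.length ≤ n := by
    have := List.length_le_sum_of_one_le (lam.map Prod.fst)
      (fun x hx => by
        obtain ⟨p, hp, rfl⟩ := List.mem_map.1 hx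
        exact hpos p hp)
    simpa [hsum] using this
  exact le_trans (List.countP_le_length (p := pr)) hlen

lemma primcSetG_empty {k : ℕ} {x : PrimcColor} {n i j t : ℕ}
    (h : n < i ∨ n < j ∨ n < t) : primcSetG k x n i j t = ∅ := by
  rw [Set.eq_empty_iff_forall_notMem]
  rintro lam ⟨hP, -, hsum, hi, hj, ht⟩
  have h1 := counts_le hP.1 hsum (fun p => decide (p.2 = a))
  have h2 := counts_le hP.1 hsum (fun p => decide (p.2 = c))
  have h3 := counts_le hP.1 hsum (fun p => decide (p.2 = d))
  omega

lemma primcSetE_empty {k : ℕ} {x : PrimcColor} {n i j t : ℕ}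
    (h : n < i ∨ n < j ∨ n < t) : primcSetE k x n i j t = ∅ := by
  rw [Set.eq_empty_iff_forall_notMem]
  rintro lam ⟨hP, -, hsum, hi, hj, ht⟩
  have h1 := counts_le hP.1 hsum (fun p => decide (p.2 = a))
  have h2 := counts_le hP.1 hsum (fun p => decide (p.2 = c))
  have h3 := counts_le hP.1 hsum (fun p => decide (p.2 = d))
  omega

/-- A partition with largest part exactly `k_x` has sum at least `k`. -/
lemma primcSetE_empty_of_sum_lt {k : ℕ} {x : PrimcColor} {n i j t : ℕ} (h : n < k) :
    primcSetE k x n i j t = ∅ := by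
  rw [Set.eq_empty_iff_forall_notMem]
  rintro lam ⟨hP, hhead, hsum, -⟩
  have hmem : (k, x) ∈ lam := List.mem_of_mem_head? hhead
  have : k ≤ (lam.map Prod.fst).sum :=
    List.single_le_sum (fun y _ => Nat.zero_le y) _
      (List.mem_map.2 ⟨(k, x), hmem, rfl⟩)
  omega

/-- A partition with largest part exactly `k_a` has at least one part coloured `a`. -/
lemma primcSetE_empty_of_no_a {k n j t : ℕ} :
    primcSetE k a n 0 j t = ∅ := by
  rw [Set.eq_empty_iff_forall_notMem]
  rintro lam ⟨hP, hhead, hsum, hi, -⟩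
  have hmem : (k, a) ∈ lam := List.mem_of_mem_head? hhead
  have : 0 < lam.countP (fun p => decide (p.2 = a)) :=
    List.countP_pos_iff.2 ⟨(k, a), hmem, by simp⟩
  omega

lemma primcSetG_decomp (m n i j t : ℕ) :
    primcSetG (m + 2) a n i j t = primcSetG (m + 1) d n i j t ∪ primcSetE (m + 2) a n i j t := by
  ext lam
  simp only [primcSetG, primcSetE, Set.mem_setOf_eq, Set.mem_union]
  constructor
  · rintro ⟨hP, hrank, hrest⟩
    cases lam with
    | nil => exact Or.inl ⟨hP, by simp, hrest⟩
    | cons hd tl =>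
      by_cases hhd : hd = (m + 2, a)
      · exact Or.inr ⟨hP, by simp [hhd], hrest⟩
      · left
        refine ⟨hP, ?_, hrest⟩
        have hall := rank_le_head hP (hd := hd) (by simp)
        have h1 := hrank hd (by simp)
        have hhdrank : primcRank hd.1 hd.2 ≤ primcRank (m + 1) d := by
          obtain ⟨v, x⟩ := hd
          cases x with
          | a =>
            have hv : v ≠ m + 2 := fun hv => hhd (by simp [hv])
            simp only [primcRank] at h1 ⊢
            omega
          | b => simp only [primcRank] at h1 ⊢; omega
          | c => simp only [primcRank] at h1 ⊢; omega
          | d => simp only [primcRank] at h1 ⊢; omega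
        exact fun p hp => le_trans (hall p hp) hhdrank
  · rintro (⟨hP, hrank, hrest⟩ | ⟨hP, hhead, hrest⟩)
    · exact ⟨hP, fun p hp => le_trans (hrank p hp)
        (by simp only [primcRank]; omega), hrest⟩
    · refine ⟨hP, fun p hp => ?_, hrest⟩
      simpa [primcRank] using rank_le_head hP hhead p hp

lemma primcSetG_disjoint (m n i j t : ℕ) :
    Disjoint (primcSetG (m + 1) d n i j t) (primcSetE (m + 2) a n i j t) := by
  rw [Set.disjoint_left]
  rintro lam ⟨-, hrank, -⟩ ⟨-, hhead, -⟩
  have := hrank (m + 2, a) (List.mem_of_mem_head? hhead)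
  simp only [primcRank] at this
  omega

lemma primcSetE2_disjoint (m r i j t : ℕ) :
    Disjoint (primcSetE (m + 1) b r i j t) (primcSetG m d r i j t) := by
  rw [Set.disjoint_left]
  rintro lam ⟨-, hhead, -⟩ ⟨-, hrank, -⟩
  have := hrank (m + 1, b) (List.mem_of_mem_head? hhead)
  simp only [primcRank] at this
  omega

lemma primcSetE_decomp (m r i j t : ℕ) :
    primcSetE (m + 2) a (m + 2 + r) (i + 1) j t =
      (List.cons ((m + 2 : ℕ), a)) ''
        (primcSetE (m + 1) b r i j t ∪ primcSetG m d r i j t) := by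
  ext lam
  simp only [primcSetE, primcSetG, Set.mem_setOf_eq, Set.mem_image, Set.mem_union]
  constructor
  · rintro ⟨⟨hpos, hchain⟩, hhead, hsum, hca, hcc, hcd⟩
    cases lam with
    | nil => simp at hhead
    | cons hd tl =>
      have hhd : hd = (m + 2, a) := by simpa using hhead
      subst hhd
      refine ⟨tl, ?_, rfl⟩
      have hpos' : ∀ p ∈ tl, 0 < p.1 := fun p hp => hpos p (List.mem_cons_of_mem _ hp)
      have hchain' : tl.Chain' _ := hchain.tail
      have hP' : IsPrimcPartition tl := ⟨hpos', hchain'⟩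
      have hsum' : (tl.map Prod.fst).sum = r := by
        simp only [List.map_cons, List.sum_cons] at hsum
        omega
      have hca' : tl.countP (fun p => decide (p.2 = a)) = i := by
        simp only [List.countP_cons, decide_eq_true_eq] at hca
        simp at hca
        omega
      have hcc' : tl.countP (fun p => decide (p.2 = c)) = j := by
        simp only [List.countP_cons] at hcc
        simp at hcc
        omega
      have hcd' : tl.countP (fun p => decide (p.2 = d)) = t := by
        simp only [List.countP_cons] at hcd
        simp at hcd
        omega
      cases tl with
      | nil => exact Or.inr ⟨hP', by simp, hsum', hca', hcc', hcd'⟩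
      | cons q rest =>
        have hstep : q.1 + matB a q.2 ≤ m + 2 := (List.isChain_cons_cons.1 hchain).1
        by_cases hq : q = (m + 1, b)
        · exact Or.inl ⟨hP', by simp [hq], hsum', hca', hcc', hcd'⟩
        · right
          refine ⟨hP', fun p hp => ?_, hsum', hca', hcc', hcd'⟩
          refine le_trans (rank_le_head hP' (hd := q) (by simp) p hp) ?_
          have hq1 : 0 < q.1 := hpos' q (by simp)
          obtain ⟨v, x⟩ := q
          cases x with
          | a => simp only [matB, primcRank] at hstep ⊢; omega
          | b =>
            have hv : v ≠ m + 1 := fun hv => hq (by simp [hv])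
            simp only [matB, primcRank] at hstep ⊢
            omega
          | c => simp only [matB, primcRank] at hstep ⊢; omega
          | d => simp only [matB, primcRank] at hstep ⊢; omega
  · rintro ⟨l, hl, rfl⟩
    rcases hl with ⟨⟨hpos, hchain⟩, hhead, hsum, hca, hcc, hcd⟩ |
      ⟨⟨hpos, hchain⟩, hrank, hsum, hca, hcc, hcd⟩
    · -- l has head (m+1, b)
      refine ⟨⟨?_, ?_⟩, by simp, ?_, ?_, ?_, ?_⟩
      · rintro p hp
        rcases List.mem_cons.1 hp with rfl | hp
        · omega
        · exact hpos p hp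
      · cases l with
        | nil => simp at hhead
        | cons q rest =>
          have hq : q = (m + 1, b) := by simpa using hhead
          refine List.isChain_cons_cons.2 ⟨?_, hchain⟩
          subst hq
          simp [matB]
      · simp only [List.map_cons, List.sum_cons, hsum]
      · simp only [List.countP_cons, hca]; simp
      · simp only [List.countP_cons, hcc]; simp
      · simp only [List.countP_cons, hcd]; simp
    · -- l has all parts at most (m)_d
      refine ⟨⟨?_, ?_⟩, by simp, ?_, ?_, ?_, ?_⟩
      · rintro p hp
        rcases List.mem_cons.1 hp with rfl | hp
        · omega
        · exact hpos p hp
      · cases l with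
        | nil => exact List.isChain_singleton _
        | cons q rest =>
          refine List.isChain_cons_cons.2 ⟨?_, hchain⟩
          have := hrank q (by simp)
          obtain ⟨v, x⟩ := q
          cases x <;> simp only [matB, primcRank] at this ⊢ <;> omega
      · simp only [List.map_cons, List.sum_cons, hsum]
      · simp only [List.countP_cons, hca]; simp
      · simp only [List.countP_cons, hcc]; simp
      · simp only [List.countP_cons, hcd]; simp

lemma primc_card1 (m n i j t : ℕ) :
    Nat.card (primcSetG (m + 2) a n i j t) =
      Nat.card (primcSetG (m + 1) d n i j t) + Nat.card (primcSetE (m + 2) a n i j t) := by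
  rw [Nat.card_coe_set_eq, Nat.card_coe_set_eq, Nat.card_coe_set_eq,
    primcSetG_decomp,
    Set.ncard_union_eq (primcSetG_disjoint m n i j t) (primcSetG_finite _ _ _ _ _ _)
      (primcSetE_finite _ _ _ _ _ _)]

lemma primc_card2 (m r i j t : ℕ) :
    Nat.card (primcSetE (m + 2) a (m + 2 + r) (i + 1) j t) =
      Nat.card (primcSetE (m + 1) b r i j t) + Nat.card (primcSetG m d r i j t) := by
  rw [Nat.card_coe_set_eq, Nat.card_coe_set_eq, Nat.card_coe_set_eq,
    primcSetE_decomp,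
    Set.ncard_image_of_injective _ (List.cons_injective),
    Set.ncard_union_eq (primcSetE2_disjoint m r i j t) (primcSetE_finite _ _ _ _ _ _)
      (primcSetG_finite _ _ _ _ _ _)]

lemma card_zero_of_empty {α : Type*} {s : Set α} (h : s = ∅) : Nat.card s = 0 := by
  simp [h]

lemma sum_range_extend {M : Type*} [AddCommMonoid M] {u v : ℕ} (huv : u ≤ v) (f : ℕ → M)
    (hf : ∀ x, u ≤ x → f x = 0) :
    ∑ x ∈ Finset.range u, f x = ∑ x ∈ Finset.range v, f x :=
  Finset.sum_subset (Finset.range_subset_range.2 huv)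
    (fun x _ hx => hf x (by simpa using hx))

open PowerSeries in
/-- For k ≥ 2: G_{k_a} − G_{(k−1)_d} = E_{k_a} = a q^k (E_{(k−1)_b} + G_{(k−2)_d}). -/
theorem primcG_rec (k : ℕ) (hk : 2 ≤ k) :
    primcG k a - primcG (k - 1) d = primcE k a ∧
    primcE k a =
      C (MvPolynomial.X 0 : PrimcRing) * (X : PowerSeries PrimcRing) ^ k *
        (primcE (k - 1) b + primcG (k - 2) d) := by
  obtain ⟨m, rfl⟩ : ∃ m, k = m + 2 := ⟨k - 2, by omega⟩
  have h1 : m + 2 - 1 = m + 1 := rfl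
  have h2 : m + 2 - 2 = m := rfl
  rw [h1, h2]
  constructor
  · refine PowerSeries.ext fun n => ?_
    rw [map_sub, primcG_eq, primcG_eq, primcE_eq, coeff_mk, coeff_mk, coeff_mk,
      sub_eq_iff_eq_add']
    rw [← Finset.sum_add_distrib]
    refine Finset.sum_congr rfl fun i _ => ?_
    rw [← Finset.sum_add_distrib]
    refine Finset.sum_congr rfl fun j _ => ?_
    rw [← Finset.sum_add_distrib]
    refine Finset.sum_congr rfl fun t _ => ?_
    rw [primc_card1 m n i j t]
    push_cast
    ring
  · have hrw : C (MvPolynomial.X 0 : PrimcRing) * (X : PowerSeries PrimcRing) ^ (m + 2) *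
        (primcE (m + 1) b + primcG m d) =
        C (MvPolynomial.X 0 : PrimcRing) * (primcE (m + 1) b + primcG m d) *
          (X : PowerSeries PrimcRing) ^ (m + 2) := by ring
    rw [hrw]
    refine PowerSeries.ext fun n => ?_
    rw [coeff_mul_X_pow', primcE_eq (m + 2) a, coeff_mk]
    split_ifs with hn
    · -- n ≥ m + 2
      obtain ⟨r, rfl⟩ : ∃ r, n = m + 2 + r := ⟨n - (m + 2), by omega⟩
      have hr : m + 2 + r - (m + 2) = r := by omega
      rw [hr, coeff_C_mul, map_add, primcE_eq (m + 1) b, primcG_eq m d, coeff_mk, coeff_mk]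
      have hEvan : ∀ i j t, r < i ∨ r < j ∨ r < t →
          Nat.card (primcSetE (m + 1) b r i j t) = 0 :=
        fun i j t h => card_zero_of_empty (primcSetE_empty h)
      have hGvan : ∀ i j t, r < i ∨ r < j ∨ r < t →
          Nat.card (primcSetG m d r i j t) = 0 :=
        fun i j t h => card_zero_of_empty (primcSetG_empty h)
      have hM : ∀ i j t : ℕ, (Nat.card (primcSetE (m + 2) a (m + 2 + r) (i + 1) j t) : PrimcRing) =
          (Nat.card (primcSetE (m + 1) b r i j t) : PrimcRing) +
            (Nat.card (primcSetG m d r i j t) : PrimcRing) := by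
        intro i j t
        rw [primc_card2]
        push_cast
        ring
      calc
        ∑ i ∈ Finset.range (m + 2 + r + 1), ∑ j ∈ Finset.range (m + 2 + r + 1),
            ∑ t ∈ Finset.range (m + 2 + r + 1),
            (Nat.card (primcSetE (m + 2) a (m + 2 + r) i j t) : PrimcRing) *
              (MvPolynomial.X 0 ^ i * MvPolynomial.X 1 ^ j * MvPolynomial.X 2 ^ t)
          = ∑ i ∈ Finset.range (r + 1), ∑ j ∈ Finset.range (r + 1),
              ∑ t ∈ Finset.range (r + 1),
              ((Nat.card (primcSetE (m + 1) b r i j t) : PrimcRing) +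
                (Nat.card (primcSetG m d r i j t) : PrimcRing)) *
                (MvPolynomial.X 0 ^ (i + 1) * MvPolynomial.X 1 ^ j * MvPolynomial.X 2 ^ t) := by
            rw [Finset.sum_range_succ']
            have hzero : (∑ j ∈ Finset.range (m + 2 + r + 1), ∑ t ∈ Finset.range (m + 2 + r + 1),
                (Nat.card (primcSetE (m + 2) a (m + 2 + r) 0 j t) : PrimcRing) *
                  (MvPolynomial.X 0 ^ 0 * MvPolynomial.X 1 ^ j * MvPolynomial.X 2 ^ t)) = 0 := by
              refine Finset.sum_eq_zero fun j _ => Finset.sum_eq_zero fun t _ => ?_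
              rw [card_zero_of_empty primcSetE_empty_of_no_a]
              simp
            rw [hzero, add_zero]
            rw [← sum_range_extend (by omega : r + 1 ≤ m + 2 + r) _ ?van]
            case van =>
              intro i hi
              refine Finset.sum_eq_zero fun j _ => Finset.sum_eq_zero fun t _ => ?_
              rw [hM, hEvan i j t (Or.inl (by omega)), hGvan i j t (Or.inl (by omega))]
              simp
            refine Finset.sum_congr rfl fun i _ => ?_
            rw [← sum_range_extend (by omega : r + 1 ≤ m + 2 + r + 1) _ ?vanj]
            case vanj =>
              intro j hj
              refine Finset.sum_eq_zero fun t _ => ?_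
              rw [hM, hEvan i j t (Or.inr (Or.inl (by omega))),
                hGvan i j t (Or.inr (Or.inl (by omega)))]
              simp
            refine Finset.sum_congr rfl fun j _ => ?_
            rw [← sum_range_extend (by omega : r + 1 ≤ m + 2 + r + 1) _ ?vant]
            case vant =>
              intro t ht
              rw [hM, hEvan i j t (Or.inr (Or.inr (by omega))),
                hGvan i j t (Or.inr (Or.inr (by omega)))]
              simp
            refine Finset.sum_congr rfl fun t _ => ?_
            rw [hM]
        _ = MvPolynomial.X 0 *
              ((∑ i ∈ Finset.range (r + 1), ∑ j ∈ Finset.range (r + 1),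
                ∑ t ∈ Finset.range (r + 1),
                (Nat.card (primcSetE (m + 1) b r i j t) : PrimcRing) *
                  (MvPolynomial.X 0 ^ i * MvPolynomial.X 1 ^ j * MvPolynomial.X 2 ^ t)) +
              ∑ i ∈ Finset.range (r + 1), ∑ j ∈ Finset.range (r + 1),
                ∑ t ∈ Finset.range (r + 1),
                (Nat.card (primcSetG m d r i j t) : PrimcRing) *
                  (MvPolynomial.X 0 ^ i * MvPolynomial.X 1 ^ j * MvPolynomial.X 2 ^ t)) := by
            rw [← Finset.sum_add_distrib, Finset.mul_sum]
            refine Finset.sum_congr rfl fun i _ => ?_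
            rw [← Finset.sum_add_distrib, Finset.mul_sum]
            refine Finset.sum_congr rfl fun j _ => ?_
            rw [← Finset.sum_add_distrib, Finset.mul_sum]
            refine Finset.sum_congr rfl fun t _ => ?_
            ring
    · -- n < m + 2 : every partition with head (m+2, a) has sum ≥ m + 2
      refine Finset.sum_eq_zero fun i _ => Finset.sum_eq_zero fun j _ =>
        Finset.sum_eq_zero fun t _ => ?_
      rw [card_zero_of_empty (primcSetE_empty_of_sum_lt (by omega))]
      simp
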